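/- The minimum in the definition of the order of a Rees algebra at a point, ord_A(p) = min_{i>0} ord_p(A_i)/i, is attained at some degree i belonging to any set of generating degrees of A. -/
import Mathlib


/-- The order of an ideal `I` in a local ring: the largest `n` with `I ⊆ m^n`. -/
noncomputable def idealOrd {R : Type*} [CommRing R] [IsLocalRing R] (I : Ideal R) : ℕ∞ :=
  ⨆ n ∈ {n : ℕ | I ≤ IsLocalRing.maximalIdeal R ^ n}, (n : ℕ∞)

/-- `A` is generated in the degrees of the finite set `K`. -/
def HasGeneratingDegrees {R : Type*} [CommRing R] (A : ℕ → Ideal R) (K : Finset ℕ) : Prop :=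
  ∀ i : ℕ, 0 < i →
    A i = ⨆ (s : Multiset ℕ) (_ : ∀ j ∈ s, j ∈ K) (_ : s.sum = i), (s.map A).prod

open IsLocalRing

lemma le_pow_iff_le_idealOrd {R : Type*} [CommRing R] [IsLocalRing R] (I : Ideal R) (n : ℕ) :
    I ≤ maximalIdeal R ^ n ↔ (n : ℕ∞) ≤ idealOrd I := by
  constructor
  · intro h
    exact le_iSup₂ (f := fun m (_ : m ∈ {m : ℕ | I ≤ maximalIdeal R ^ m}) => (m : ℕ∞)) n h
  · intro hn
    rcases Nat.eq_zero_or_pos n with rfl | hpos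
    · simp
    by_contra h
    have hub : idealOrd I ≤ ((n - 1 : ℕ) : ℕ∞) := by
      apply iSup₂_le
      intro m hm
      have : m ≤ n - 1 := by
        by_contra hm'
        exact h (le_trans hm (Ideal.pow_le_pow_right (by omega)))
      exact_mod_cast this
    have h1 := le_trans hn hub
    have : n ≤ n - 1 := by exact_mod_cast h1
    omega

lemma enat_mul_cancel {a b : ℕ∞} {c : ℕ} (hc : 0 < c)
    (h : a * (c : ℕ∞) ≤ b * (c : ℕ∞)) : a ≤ b := by
  cases b with
  | top => exact le_top
  | coe m =>
    cases a with
    | top =>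
      exfalso
      rw [ENat.top_mul (by exact_mod_cast hc.ne')] at h
      have h2 : ((m * c : ℕ) : ℕ∞) = ⊤ := by
        push_cast
        exact top_le_iff.1 h
      exact ENat.coe_ne_top _ h2
    | coe k =>
      have : k * c ≤ m * c := by exact_mod_cast h
      exact_mod_cast Nat.le_of_mul_le_mul_right this hc

lemma multiset_prod_le_pow {R : Type*} [CommRing R] (M : Ideal R) (A : ℕ → Ideal R) (c : ℕ → ℕ) :
    ∀ s : Multiset ℕ, (∀ j ∈ s, A j ≤ M ^ c j) → (s.map A).prod ≤ M ^ (s.map c).sum := by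
  intro s
  induction s using Multiset.induction with
  | empty => simp
  | cons a s ih =>
    intro h
    simp only [Multiset.map_cons, Multiset.prod_cons, Multiset.sum_cons, pow_add]
    exact mul_le_mul' (h a (Multiset.mem_cons_self a s))
      (ih fun j hj => h j (Multiset.mem_cons_of_mem hj))

/-- the minimum in the definition of the order of a Rees algebra at
a point, `ord_A(p) = min_{i>0} ord_p(A i)/i`, is attained at a degree belonging to
any set of generating degrees: there is `n ∈ K` with
`ord_p(A n)/n ≤ ord_p(A i)/i` for all `i > 0` (stated by cross-multiplication in
`ℕ∞`). -/
theorem rees_order_min_attained_at_generating_degree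
    {R : Type*} [CommRing R] [IsLocalRing R]
    (A : ℕ → Ideal R) (hA0 : A 0 = ⊤) (hAmul : ∀ i j, A i * A j ≤ A (i + j))
    (K : Finset ℕ) (hKne : K.Nonempty) (hKpos : ∀ j ∈ K, 0 < j)
    (hgen : HasGeneratingDegrees A K) :
    ∃ n ∈ K, ∀ i : ℕ, 0 < i →
      idealOrd (A n) * (i : ℕ∞) ≤ idealOrd (A i) * (n : ℕ∞) := by
  classical
  set M := maximalIdeal R with hM
  set N : ℕ := K.prod id with hN
  have hNpos : 0 < N := Finset.prod_pos fun j hj => hKpos j hj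
  obtain ⟨n, hnK, hmin⟩ :=
    K.exists_min_image (fun j => idealOrd (A j) * ((N / j : ℕ) : ℕ∞)) hKne
  have hnpos := hKpos n hnK
  refine ⟨n, hnK, ?_⟩
  -- cross-multiplied minimality over K
  have hcross : ∀ j ∈ K, idealOrd (A n) * (j : ℕ∞) ≤ idealOrd (A j) * (n : ℕ∞) := by
    intro j hjK
    have hjpos := hKpos j hjK
    have cdn : ((N / n : ℕ) : ℕ∞) * (n : ℕ∞) = (N : ℕ∞) := by
      exact_mod_cast congrArg (Nat.cast (R := ℕ∞))
        (Nat.div_mul_cancel (Finset.dvd_prod_of_mem id hnK))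
    have cdj : ((N / j : ℕ) : ℕ∞) * (j : ℕ∞) = (N : ℕ∞) := by
      exact_mod_cast congrArg (Nat.cast (R := ℕ∞))
        (Nat.div_mul_cancel (Finset.dvd_prod_of_mem id hjK))
    have h1 := hmin j hjK
    have h2 := mul_le_mul_left h1 ((n : ℕ∞) * (j : ℕ∞))
    have e1 : idealOrd (A n) * ((N / n : ℕ) : ℕ∞) * ((n : ℕ∞) * (j : ℕ∞))
        = idealOrd (A n) * (j : ℕ∞) * (N : ℕ∞) := by
      rw [← cdn]; ring
    have e2 : idealOrd (A j) * ((N / j : ℕ) : ℕ∞) * ((n : ℕ∞) * (j : ℕ∞))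
        = idealOrd (A j) * (n : ℕ∞) * (N : ℕ∞) := by
      rw [← cdj]; ring
    rw [e1, e2] at h2
    exact enat_mul_cancel hNpos h2
  intro i hi
  -- general bound from generation
  have bound : ∀ (c : ℕ → ℕ) (t : ℕ), (∀ j ∈ K, A j ≤ M ^ c j) →
      (∀ s : Multiset ℕ, (∀ j ∈ s, j ∈ K) → s.sum = i → t ≤ (s.map c).sum) →
      A i ≤ M ^ t := by
    intro c t hc hs
    rw [hgen i hi]
    refine iSup_le fun s => iSup_le fun hsK => iSup_le fun hsum => ?_
    exact le_trans (multiset_prod_le_pow M A c s fun j hj => hc j (hsK j hj))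
      (Ideal.pow_le_pow_right (hs s hsK hsum))
  by_cases hx : idealOrd (A n) = ⊤
  · -- top case : every A j has infinite order, hence so does A i
    have htopj : ∀ j ∈ K, ∀ t : ℕ, A j ≤ M ^ t := by
      intro j hjK t
      rw [le_pow_iff_le_idealOrd]
      by_cases hb : idealOrd (A j) = ⊤
      · rw [hb]; exact le_top
      · exfalso
        lift idealOrd (A j) to ℕ using hb with b hb'
        have := hcross j hjK
        rw [hx, ← hb', ENat.top_mul (by exact_mod_cast (hKpos j hjK).ne')] at this
        have h2 : ((b * n : ℕ) : ℕ∞) = ⊤ := by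
          push_cast
          exact top_le_iff.1 this
        exact ENat.coe_ne_top _ h2
    have htopi : ∀ t : ℕ, (t : ℕ∞) ≤ idealOrd (A i) := by
      intro t
      rw [← le_pow_iff_le_idealOrd]
      refine bound (fun _ => t) t (fun j hj => htopj j hj t) ?_
      intro s hsK hsum
      have hs0 : s ≠ 0 := by
        intro h0; rw [h0] at hsum; simp at hsum; omega
      have hcard : 1 ≤ Multiset.card s := Multiset.card_pos.2 hs0
      calc t = 1 * t := (one_mul t).symm
        _ ≤ Multiset.card s * t := Nat.mul_le_mul_right t hcard
        _ = (s.map fun _ => t).sum := by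
            rw [Multiset.map_const', Multiset.sum_replicate, smul_eq_mul]
    have : idealOrd (A i) = ⊤ := by
      by_contra hb
      lift idealOrd (A i) to ℕ using hb with b hb'
      have h5 := htopi (b + 1)
      have : b + 1 ≤ b := by exact_mod_cast h5
      omega
    rw [this, hx, ENat.top_mul (by exact_mod_cast hi.ne' : (i : ℕ∞) ≠ 0),
      ENat.top_mul (by exact_mod_cast hnpos.ne' : (n : ℕ∞) ≠ 0)]
  · -- finite case
    obtain ⟨a, ha⟩ : ∃ a : ℕ, (a : ℕ∞) = idealOrd (A n) := by
      lift idealOrd (A n) to ℕ using hx with a ha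
      exact ⟨a, rfl⟩
    set c : ℕ → ℕ := fun j => (a * j + n - 1) / n
    set t : ℕ := (a * i + n - 1) / n
    have hceil : ∀ m : ℕ, m ≤ n * ((m + n - 1) / n) := by
      intro m
      have := (Nat.div_le_iff_le_mul_add_pred hnpos).1 (le_refl ((m + n - 1) / n))
      omega
    have hc : ∀ j ∈ K, A j ≤ M ^ c j := by
      intro j hjK
      rw [le_pow_iff_le_idealOrd]
      by_cases hb : idealOrd (A j) = ⊤
      · rw [hb]; exact le_top
      lift idealOrd (A j) to ℕ using hb with b hb'
      have hcj := hcross j hjK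
      rw [← ha, ← hb'] at hcj
      have hab : a * j ≤ b * n := by exact_mod_cast hcj
      have : c j ≤ b := by
        show (a * j + n - 1) / n ≤ b
        rw [Nat.div_le_iff_le_mul_add_pred hnpos]
        have : b * n = n * b := Nat.mul_comm b n
        omega
      exact_mod_cast this
    have hti : (t : ℕ∞) ≤ idealOrd (A i) := by
      rw [← le_pow_iff_le_idealOrd]
      refine bound c t hc ?_
      intro s hsK hsum
      have hjle : ∀ j ∈ s, a * j ≤ n * c j := fun j _ => hceil (a * j)
      have hsumle : (s.map fun j => a * j).sum ≤ (s.map fun j => n * c j).sum :=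
        Multiset.sum_map_le_sum_map _ _ hjle
      have e1 : (s.map fun j => a * j).sum = a * i := by
        have h9 := Multiset.sum_map_mul_left (s := s) (a := a) (f := fun j => j)
        rw [Multiset.map_id'] at h9
        rw [h9, hsum]
      have e2 : (s.map fun j => n * c j).sum = n * (s.map c).sum :=
        Multiset.sum_map_mul_left
      show (a * i + n - 1) / n ≤ (s.map c).sum
      rw [Nat.div_le_iff_le_mul_add_pred hnpos]
      rw [e1, e2] at hsumle
      omega
    have htn : a * i ≤ t * n := by
      show a * i ≤ (a * i + n - 1) / n * n
      rw [Nat.mul_comm ((a * i + n - 1) / n) n]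
      exact hceil (a * i)
    calc idealOrd (A n) * (i : ℕ∞) = ((a * i : ℕ) : ℕ∞) := by rw [← ha, Nat.cast_mul]
      _ ≤ ((t * n : ℕ) : ℕ∞) := by exact_mod_cast htn
      _ = (t : ℕ∞) * (n : ℕ∞) := Nat.cast_mul t n
      _ ≤ idealOrd (A i) * (n : ℕ∞) := mul_le_mul_left hti _
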